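/- There is a constant C > 0 such that for every radial Schwartz function f on ℝ³ and every x ∈ ℝ³, ‖x‖ · |f(x)|² ≤ C ‖f‖²_{Ḣ¹}. -/

import Mathlib

noncomputable section

open MeasureTheory Real Complex FourierTransform Filter Set ENNReal

/-- Euclidean space `ℝ^d`. -/
abbrev Rd (d : ℕ) : Type := EuclideanSpace ℝ (Fin d)

/-- The Fourier transform `𝓕f(ξ) = ∫ e^{-2πi x·ξ} f(x) dx`. -/
def FT {d : ℕ} (f : Rd d → ℂ) : Rd d → ℂ := 𝓕 f

/-- The inverse Fourier transform. -/
def FTinv {d : ℕ} (f : Rd d → ℂ) : Rd d → ℂ := 𝓕⁻ f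

/-- Squared inhomogeneous Sobolev norm `‖f‖_{H^σ}² = ∫ (1+‖ξ‖²)^σ |g(ξ)|² dξ`, computed from
the frequency-side function `g = 𝓕f`. -/
def sobSq (d : ℕ) (σ : ℝ) (g : Rd d → ℂ) : ℝ≥0∞ :=
  ∫⁻ ξ : Rd d, ENNReal.ofReal ((1 + ‖ξ‖ ^ 2) ^ σ) * (‖g ξ‖₊ : ℝ≥0∞) ^ 2

/-- Squared homogeneous Sobolev norm `‖f‖_{Ḣ^σ}² = ∫ ‖ξ‖^{2σ} |g(ξ)|² dξ`, computed from
the frequency-side function `g = 𝓕f`. -/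
def dotSobSq (d : ℕ) (σ : ℝ) (g : Rd d → ℂ) : ℝ≥0∞ :=
  ∫⁻ ξ : Rd d, ENNReal.ofReal (‖ξ‖ ^ (2 * σ)) * (‖g ξ‖₊ : ℝ≥0∞) ^ 2

/-- The multiplier symbol `m_{N,s}` of the `I`-operator. -/
def mI (d : ℕ) (N s : ℝ) (ξ : Rd d) : ℝ := if ‖ξ‖ ≤ N then 1 else (N / ‖ξ‖) ^ (1 - s)

/-- The operator `I_N`, the Fourier multiplier with symbol `m_{N,s}`, realized as
`𝓕⁻(m_{N,s} · 𝓕 f)`. -/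
def IopN (d : ℕ) (N s : ℝ) (f : Rd d → ℂ) : Rd d → ℂ :=
  FTinv (fun ξ => (mI d N s ξ : ℂ) * FT f ξ)

/-- The symbol `e^{-4π² i t ‖ξ‖²}` of the free Schrödinger propagator `e^{itΔ}`. -/
def propag (d : ℕ) (t : ℝ) (ξ : Rd d) : ℂ :=
  Complex.exp (-((4 * Real.pi ^ 2 * t * ‖ξ‖ ^ 2 : ℝ) : ℂ) * Complex.I)

/-- The nonlinearity `|g|^{2k} g`. -/
def NLabs (k : ℕ) {d : ℕ} (g : Rd d → ℂ) (x : Rd d) : ℂ := (‖g x‖ : ℂ) ^ (2 * k) * g x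

/-- The energy `E_k(g) = (1/2)∫|∇g|² + (1/(2k+2))∫|g|^{2k+2}` (with `k = 1` this is the
cubic energy `E`). -/
def Energy (d k : ℕ) (g : Rd d → ℂ) : ℝ≥0∞ :=
  (1 / 2) * ∫⁻ x : Rd d, (‖fderiv ℝ g x‖₊ : ℝ≥0∞) ^ 2 +
    (1 / (2 * (k : ℝ≥0∞) + 2)) * ∫⁻ x : Rd d, (‖g x‖₊ : ℝ≥0∞) ^ (2 * k + 2)

/-- `g` is the (distributional) Fourier transform of `f`, expressed through the multiplication
formula `∫ f · 𝓕φ = ∫ g · φ` against all Schwartz functions `φ`. -/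
def IsFTPair (d : ℕ) (f g : Rd d → ℂ) : Prop :=
  ∀ φ : SchwartzMap (Rd d) ℂ, (∫ x : Rd d, f x * FT (⇑φ) x) = ∫ ξ : Rd d, g ξ * φ ξ

/-- `v : ℝ → (ℝ^d → ℂ)` is the frequency-side representation of a continuous `H²`-valued
Duhamel solution of `i∂_t u + Δ u = |u|^{2k} u` on `[a, b]`; the physical solution is
`u t = 𝓕⁻(v t)`. -/
def IsSolutionFreq (d k : ℕ) (a b : ℝ) (v : ℝ → Rd d → ℂ) : Prop :=
  (∀ t ∈ Set.Icc a b, AEStronglyMeasurable (v t) volume ∧ sobSq d 2 (v t) < ⊤) ∧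
  (∀ t₀ ∈ Set.Icc a b,
    Tendsto (fun t => sobSq d 2 (fun ξ => v t ξ - v t₀ ξ)) (nhdsWithin t₀ (Set.Icc a b)) (nhds 0)) ∧
  (∀ a' ∈ Set.Icc a b, ∀ t ∈ Set.Icc a b, ∀ᵐ ξ : Rd d ∂volume,
    v t ξ = propag d (t - a') ξ * v a' ξ -
      Complex.I * ∫ τ in a'..t, propag d (t - τ) ξ * FT (NLabs k (FTinv (v τ))) ξ)

def SchwartzMap.pderivCLM (𝕜 : Type*) [RCLike 𝕜] {E F : Type*} [NormedAddCommGroup E]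
    [NormedSpace ℝ E] [NormedAddCommGroup F] [NormedSpace ℝ F] [NormedSpace 𝕜 F]
    [SMulCommClass ℝ 𝕜 F] (m : E) : SchwartzMap E F →L[𝕜] SchwartzMap E F :=
  LineDeriv.lineDerivOpCLM 𝕜 (SchwartzMap E F) m

theorem SchwartzMap.pderivCLM_apply (𝕜 : Type*) [RCLike 𝕜] {E F : Type*} [NormedAddCommGroup E]
    [NormedSpace ℝ E] [NormedAddCommGroup F] [NormedSpace ℝ F] [NormedSpace 𝕜 F]
    [SMulCommClass ℝ 𝕜 F] (m : E) (f : SchwartzMap E F) (x : E) :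
    SchwartzMap.pderivCLM 𝕜 m f x = fderiv ℝ f x m := rfl

namespace Stmt16Aux

open scoped RealInnerProductSpace ComplexConjugate Topology

abbrev E3 : Type := EuclideanSpace ℝ (Fin 3)
abbrev e1 : E3 := EuclideanSpace.single (0 : Fin 3) (1:ℝ)

lemma norm_e1 : ‖e1‖ = 1 := by simp [EuclideanSpace.norm_single]

lemma norm_smul_e1 (s : ℝ) (hs : 0 ≤ s) : ‖s • e1‖ = s := by
  rw [norm_smul, norm_e1, mul_one, Real.norm_eq_abs, _root_.abs_of_nonneg hs]

lemma flip_inner : (innerₗ E3).flip = innerₗ E3 := by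
  apply LinearMap.ext; intro a; apply LinearMap.ext; intro b
  exact real_inner_comm a b

lemma conj_circle_smul (θ : ℝ) (z : ℂ) :
    conj ((𝐞 θ : Circle) • z) = (𝐞 (-θ) : Circle) • conj z := by
  simp only [Circle.smul_def, Real.fourierChar_apply, smul_eq_mul, map_mul, ← Complex.exp_conj,
    map_neg, Complex.conj_ofReal, Complex.conj_I, mul_neg, neg_mul]
  push_cast
  ring_nf

lemma parseval (u : SchwartzMap E3 ℂ) :
    ∫ ξ : E3, ‖𝓕 (⇑u) ξ‖ ^ 2 = ∫ x : E3, ‖u x‖ ^ 2 := by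
  set U : SchwartzMap E3 ℂ := SchwartzMap.fourierTransformCLM ℝ u with hU
  have hUc : ⇑U = 𝓕 ⇑u := rfl
  have h1 : Integrable (⇑u) volume := u.integrable
  have h2 : Integrable (⇑U) volume := U.integrable
  have h3 : Integrable (fun ξ => conj (U ξ)) volume :=
    Complex.conjCLE.toContinuousLinearMap.integrable_comp h2
  have hFw : ∀ x, 𝓕 (fun ξ => conj (U ξ)) x = conj (u x) := by
    intro x
    have inv : 𝓕⁻ (𝓕 ⇑u) x = u x :=
      h1.fourierInv_fourier_eq (by rw [← hUc]; exact h2) u.continuous.continuousAt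
    calc 𝓕 (fun ξ => conj (U ξ)) x = ∫ v, (𝐞 (-⟪v,x⟫) : Circle) • conj (U v) :=
          Real.fourier_eq _ _
      _ = ∫ v, conj ((𝐞 ⟪v,x⟫ : Circle) • U v) := by
          simp only [conj_circle_smul]
      _ = conj (∫ v, (𝐞 ⟪v,x⟫ : Circle) • U v) := integral_conj
      _ = conj (𝓕⁻ (⇑U) x) := by rw [Real.fourierInv_eq]
      _ = conj (u x) := by rw [hUc, inv]
  have hmult : ∫ ξ, 𝓕 (⇑u) ξ • conj (U ξ) = ∫ x, u x • 𝓕 (fun ξ => conj (U ξ)) x := by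
    have := VectorFourier.integral_fourierIntegral_smul_eq_flip (L := innerₗ E3)
      Real.continuous_fourierChar continuous_inner h1 h3
    rw [flip_inner] at this
    exact this
  have key : ∫ ξ, (‖U ξ‖ ^ 2 : ℂ) = ∫ x, (‖u x‖ ^ 2 : ℂ) := by
    have e1 : ∀ z : ℂ, z * conj z = ((‖z‖ ^ 2 : ℝ) : ℂ) := by
      intro z
      rw [Complex.mul_conj]
      norm_cast
      rw [Complex.normSq_eq_norm_sq]
    calc ∫ ξ, (‖U ξ‖ ^ 2 : ℂ) = ∫ ξ, 𝓕 (⇑u) ξ • conj (U ξ) := by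
          congr 1; ext ξ; rw [smul_eq_mul, ← hUc, e1]; norm_cast
      _ = ∫ x, u x • 𝓕 (fun ξ => conj (U ξ)) x := hmult
      _ = ∫ x, (‖u x‖ ^ 2 : ℂ) := by
          congr 1; ext x; rw [smul_eq_mul, hFw, e1]; norm_cast
  have a1 : ∫ ξ : E3, ((‖U ξ‖ ^ 2 : ℝ) : ℂ) = ((∫ ξ : E3, ‖U ξ‖ ^ 2 : ℝ) : ℂ) :=
    integral_ofReal (𝕜 := ℂ)
  have a2 : ∫ x : E3, ((‖u x‖ ^ 2 : ℝ) : ℂ) = ((∫ x : E3, ‖u x‖ ^ 2 : ℝ) : ℂ) :=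
    integral_ofReal (𝕜 := ℂ)
  rw [show 𝓕 (⇑u) = 𝓕 ⇑u from rfl, ← hUc]
  refine Complex.ofReal_injective ?_
  rw [← a1, ← a2]
  exact_mod_cast key

lemma norm_FT_pderiv (f : SchwartzMap E3 ℂ) (j : Fin 3) (ξ : E3) :
    ‖𝓕 (⇑(SchwartzMap.pderivCLM ℝ (EuclideanSpace.single j (1:ℝ)) f)) ξ‖
      = (2 * π) * |ξ j| * ‖𝓕 (⇑f) ξ‖ := by
  set m : E3 := EuclideanSpace.single j (1:ℝ)
  have hfd : ⇑(SchwartzMap.fderivCLM ℝ _ _ f) = fderiv ℝ ⇑f :=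
    funext fun x => SchwartzMap.fderivCLM_apply ℝ f x
  have hint : Integrable (fderiv ℝ ⇑f) volume := by
    rw [← hfd]; exact (SchwartzMap.fderivCLM ℝ _ _ f).integrable
  have hco : ⇑(SchwartzMap.pderivCLM ℝ m f) = fun x => fderiv ℝ (⇑f) x m :=
    funext fun x => SchwartzMap.pderivCLM_apply ℝ m f x
  have ev : 𝓕 (fun x => fderiv ℝ (⇑f) x m) ξ = (𝓕 (fderiv ℝ ⇑f) ξ) m := by
    rw [Real.fourier_eq, Real.fourier_eq,
      ContinuousLinearMap.integral_apply ((Real.fourierIntegral_convergent_iff ξ).2 hint)]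
    rfl
  have key := Real.fourier_fderiv f.integrable f.differentiable hint
  rw [hco, ev, key]
  simp only [VectorFourier.fourierSMulRight_apply, ContinuousLinearMap.neg_apply, innerSL_apply_apply, m,
    EuclideanSpace.inner_single_right, conj_trivial, one_mul, neg_smul, smul_smul, norm_neg,
    norm_smul]
  have : ‖2 * (π:ℂ) * I‖ = 2 * π := by
    simp [norm_mul, _root_.abs_of_nonneg Real.pi_pos.le]
  rw [this, Real.norm_eq_abs]
  rw [innerSL_apply_apply, EuclideanSpace.inner_single_right]
  simp
  ring

lemma coord_abs_le_norm (v : E3) (j : Fin 3) : |v j| ≤ ‖v‖ := by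
  have h := abs_real_inner_le_norm v (EuclideanSpace.single j (1:ℝ))
  rw [EuclideanSpace.inner_single_right] at h
  simpa [EuclideanSpace.norm_single] using h

lemma opnorm_le_sum (L : E3 →L[ℝ] ℂ) :
    ‖L‖ ≤ ∑ j : Fin 3, ‖L (EuclideanSpace.single j (1:ℝ))‖ := by
  refine L.opNorm_le_bound (Finset.sum_nonneg fun j _ => norm_nonneg _) fun v => ?_
  have hv : v = ∑ j : Fin 3, v j • EuclideanSpace.single j (1:ℝ) := by
    have := (EuclideanSpace.basisFun (Fin 3) ℝ).sum_repr v
    simp only [EuclideanSpace.basisFun_repr, EuclideanSpace.basisFun_apply] at this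
    exact this.symm
  calc ‖L v‖ = ‖∑ j : Fin 3, v j • L (EuclideanSpace.single j (1:ℝ))‖ := by
        conv_lhs => rw [hv]
        rw [map_sum]
        simp [ContinuousLinearMap.map_smul]
    _ ≤ ∑ j : Fin 3, ‖v j • L (EuclideanSpace.single j (1:ℝ))‖ := norm_sum_le _ _
    _ ≤ ∑ j : Fin 3, ‖v‖ * ‖L (EuclideanSpace.single j (1:ℝ))‖ := by
        refine Finset.sum_le_sum fun j _ => ?_
        rw [norm_smul, Real.norm_eq_abs]
        exact mul_le_mul_of_nonneg_right (coord_abs_le_norm v j) (norm_nonneg _)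
    _ = (∑ j : Fin 3, ‖L (EuclideanSpace.single j (1:ℝ))‖) * ‖v‖ := by
        rw [Finset.sum_mul]
        exact Finset.sum_congr rfl fun j _ => mul_comm _ _

lemma opnorm_sq_le (L : E3 →L[ℝ] ℂ) :
    ‖L‖ ^ 2 ≤ 3 * ∑ j : Fin 3, ‖L (EuclideanSpace.single j (1:ℝ))‖ ^ 2 := by
  have h := opnorm_le_sum L
  have hn : (0:ℝ) ≤ ‖L‖ := norm_nonneg _
  have h2 : ‖L‖ ^ 2 ≤ (∑ j : Fin 3, ‖L (EuclideanSpace.single j (1:ℝ))‖) ^ 2 :=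
    pow_le_pow_left₀ hn h 2
  refine h2.trans ?_
  rw [Fin.sum_univ_three, Fin.sum_univ_three]
  nlinarith [sq_nonneg (‖L (EuclideanSpace.single (0:Fin 3) (1:ℝ))‖ - ‖L (EuclideanSpace.single (1:Fin 3) (1:ℝ))‖),
    sq_nonneg (‖L (EuclideanSpace.single (0:Fin 3) (1:ℝ))‖ - ‖L (EuclideanSpace.single (2:Fin 3) (1:ℝ))‖),
    sq_nonneg (‖L (EuclideanSpace.single (1:Fin 3) (1:ℝ))‖ - ‖L (EuclideanSpace.single (2:Fin 3) (1:ℝ))‖)]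

lemma schwartz_sq_integrable {F : Type*} [NormedAddCommGroup F] [NormedSpace ℝ F]
    (u : SchwartzMap E3 F) :
    Integrable (fun x => ‖u x‖ ^ 2) volume := by
  have h : Integrable (fun x => (SchwartzMap.seminorm ℝ 0 0 u : ℝ) * ‖u x‖) volume :=
    u.integrable.norm.const_mul _
  refine h.mono ((continuous_pow 2).comp u.continuous.norm).aestronglyMeasurable ?_
  filter_upwards with x
  rw [Real.norm_eq_abs, _root_.abs_of_nonneg (by positivity : (0:ℝ) ≤ ‖u x‖ ^ 2), pow_two,
    Real.norm_eq_abs, _root_.abs_of_nonneg (by positivity : (0:ℝ) ≤ (SchwartzMap.seminorm ℝ 0 0) u * ‖u x‖)]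
  exact mul_le_mul_of_nonneg_right (u.norm_le_seminorm ℝ x) (norm_nonneg _)

lemma sum_pderiv_sq (f : SchwartzMap E3 ℂ) :
    ∑ j : Fin 3, ∫ x : E3, ‖(SchwartzMap.pderivCLM ℝ (EuclideanSpace.single j (1:ℝ)) f) x‖ ^ 2
      = (2 * π) ^ 2 * ∫ ξ : E3, ‖ξ‖ ^ 2 * ‖𝓕 (⇑f) ξ‖ ^ 2 := by
  have hterm : ∀ j : Fin 3,
      (∫ x : E3, ‖(SchwartzMap.pderivCLM ℝ (EuclideanSpace.single j (1:ℝ)) f) x‖ ^ 2)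
        = ∫ ξ : E3, (2 * π) ^ 2 * ((ξ j) ^ 2 * ‖𝓕 (⇑f) ξ‖ ^ 2) := by
    intro j
    rw [← parseval (SchwartzMap.pderivCLM ℝ (EuclideanSpace.single j (1:ℝ)) f)]
    refine integral_congr_ae (Eventually.of_forall fun ξ => ?_)
    beta_reduce
    rw [show 𝓕 (⇑(SchwartzMap.pderivCLM ℝ (EuclideanSpace.single j (1:ℝ)) f))
        = 𝓕 (⇑(SchwartzMap.pderivCLM ℝ (EuclideanSpace.single j (1:ℝ)) f)) from rfl,
      norm_FT_pderiv f j ξ]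
    rw [mul_pow, mul_pow, _root_.sq_abs]
    ring
  have hint : ∀ j : Fin 3,
      Integrable (fun ξ : E3 => (2 * π) ^ 2 * ((ξ j) ^ 2 * ‖𝓕 (⇑f) ξ‖ ^ 2)) volume := by
    intro j
    have := schwartz_sq_integrable (SchwartzMap.fourierTransformCLM ℝ
      (SchwartzMap.pderivCLM ℝ (EuclideanSpace.single j (1:ℝ)) f))
    refine this.congr (Eventually.of_forall fun ξ => ?_)
    beta_reduce
    rw [show ⇑(SchwartzMap.fourierTransformCLM ℝ
        (SchwartzMap.pderivCLM ℝ (EuclideanSpace.single j (1:ℝ)) f))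
        = 𝓕 (⇑(SchwartzMap.pderivCLM ℝ (EuclideanSpace.single j (1:ℝ)) f)) from rfl,
      norm_FT_pderiv f j ξ, mul_pow, mul_pow, _root_.sq_abs]
    ring
  calc ∑ j : Fin 3, ∫ x : E3, ‖(SchwartzMap.pderivCLM ℝ (EuclideanSpace.single j (1:ℝ)) f) x‖ ^ 2
      = ∑ j : Fin 3, ∫ ξ : E3, (2 * π) ^ 2 * ((ξ j) ^ 2 * ‖𝓕 (⇑f) ξ‖ ^ 2) :=
        Finset.sum_congr rfl fun j _ => hterm j
    _ = ∫ ξ : E3, ∑ j : Fin 3, (2 * π) ^ 2 * ((ξ j) ^ 2 * ‖𝓕 (⇑f) ξ‖ ^ 2) :=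
        (integral_finset_sum _ fun j _ => hint j).symm
    _ = (2 * π) ^ 2 * ∫ ξ : E3, ‖ξ‖ ^ 2 * ‖𝓕 (⇑f) ξ‖ ^ 2 := by
        rw [← integral_const_mul]
        refine integral_congr_ae (Eventually.of_forall fun ξ => ?_)
        beta_reduce
        have hnorm : ‖ξ‖ ^ 2 = ∑ j : Fin 3, (ξ j) ^ 2 := by
          rw [EuclideanSpace.norm_eq]
          rw [Real.sq_sqrt (Finset.sum_nonneg fun j _ => sq_nonneg _)]
          exact Finset.sum_congr rfl fun j _ => by rw [Real.norm_eq_abs, _root_.sq_abs]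
        rw [hnorm, Finset.sum_mul, Finset.mul_sum]

lemma fderiv_norm_le_of_norm_eq (f : SchwartzMap E3 ℂ)
    (hrad : ∀ x y : E3, ‖x‖ = ‖y‖ → f x = f y) {y z : E3} (h : ‖y‖ = ‖z‖) :
    ‖fderiv ℝ (⇑f) z‖ ≤ ‖fderiv ℝ (⇑f) y‖ := by
  set T : E3 ≃ₗᵢ[ℝ] E3 := Submodule.reflection (ℝ ∙ (z - y))ᗮ with hT
  have hTz : T z = y := Submodule.reflection_sub h.symm
  have hfT : (⇑f) ∘ (⇑T) = ⇑f := funext fun w => hrad (T w) w (T.norm_map w)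
  have hA : ⇑T = ⇑(T.toContinuousLinearEquiv : E3 →L[ℝ] E3) := rfl
  have hcomp : fderiv ℝ (⇑f) z
      = (fderiv ℝ (⇑f) y).comp (T.toContinuousLinearEquiv : E3 →L[ℝ] E3) := by
    conv_lhs => rw [← hfT]
    rw [fderiv_comp z f.differentiable.differentiableAt
      (by rw [hA]; exact (T.toContinuousLinearEquiv : E3 →L[ℝ] E3).differentiableAt)]
    rw [hTz]
    congr 1
    rw [hA]
    exact ContinuousLinearMap.fderiv _
  rw [hcomp]
  refine (ContinuousLinearMap.opNorm_comp_le _ _).trans ?_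
  have h1 : ‖(T.toContinuousLinearEquiv : E3 →L[ℝ] E3)‖ ≤ 1 := by
    refine ContinuousLinearMap.opNorm_le_bound _ zero_le_one fun v => ?_
    rw [one_mul]
    exact le_of_eq (T.norm_map v)
  calc ‖fderiv ℝ (⇑f) y‖ * ‖(T.toContinuousLinearEquiv : E3 →L[ℝ] E3)‖
      ≤ ‖fderiv ℝ (⇑f) y‖ * 1 := by
        exact mul_le_mul_of_nonneg_left h1 (norm_nonneg _)
    _ = ‖fderiv ℝ (⇑f) y‖ := mul_one _

lemma norm_fderiv_radial (f : SchwartzMap E3 ℂ)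
    (hrad : ∀ x y : E3, ‖x‖ = ‖y‖ → f x = f y) {y z : E3} (h : ‖y‖ = ‖z‖) :
    ‖fderiv ℝ (⇑f) z‖ = ‖fderiv ℝ (⇑f) y‖ :=
  le_antisymm (fderiv_norm_le_of_norm_eq f hrad h) (fderiv_norm_le_of_norm_eq f hrad h.symm)

lemma schwartz_decay2 {F : Type*} [NormedAddCommGroup F] [NormedSpace ℝ F]
    (u : SchwartzMap E3 F) : ∃ B : ℝ, 0 < B ∧ ∀ x : E3, ‖u x‖ ≤ B / (1 + ‖x‖) ^ 2 := by
  obtain ⟨C0, hC0, h0⟩ := u.decay 0 0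
  obtain ⟨C1, hC1, h1⟩ := u.decay 1 0
  obtain ⟨C2, hC2, h2⟩ := u.decay 2 0
  refine ⟨C0 + 2 * C1 + C2, by positivity, fun x => ?_⟩
  simp only [norm_iteratedFDeriv_zero, pow_zero, one_mul, pow_one] at h0 h1 h2
  rw [le_div_iff₀ (by positivity : (0:ℝ) < (1 + ‖x‖) ^ 2)]
  nlinarith [h0 x, h1 x, h2 x, norm_nonneg (u x), norm_nonneg x]

lemma polar_fderiv (f : SchwartzMap E3 ℂ)
    (hrad : ∀ x y : E3, ‖x‖ = ‖y‖ → f x = f y) :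
    ∫ y : E3, ‖fderiv ℝ (⇑f) y‖ ^ 2
      = 3 * (volume (Metric.ball (0:E3) 1)).toReal
        * ∫ s in Ioi (0:ℝ), s ^ 2 * ‖fderiv ℝ (⇑f) (s • e1)‖ ^ 2 := by
  have h := MeasureTheory.integral_fun_norm_addHaar (volume : Measure E3)
    (fun t : ℝ => ‖fderiv ℝ (⇑f) (t • e1)‖ ^ 2)
  have hdim : Module.finrank ℝ E3 = 3 := by simp
  rw [hdim] at h
  have hpt : ∀ y : E3, ‖fderiv ℝ (⇑f) y‖ ^ 2 = ‖fderiv ℝ (⇑f) (‖y‖ • e1)‖ ^ 2 := by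
    intro y
    rw [norm_fderiv_radial f hrad (norm_smul_e1 ‖y‖ (norm_nonneg y)).symm]
  calc ∫ y : E3, ‖fderiv ℝ (⇑f) y‖ ^ 2
      = ∫ y : E3, ‖fderiv ℝ (⇑f) (‖y‖ • e1)‖ ^ 2 :=
        integral_congr_ae (Eventually.of_forall fun y => hpt y)
    _ = 3 • ((volume (Metric.ball (0:E3) 1)).toReal
          • ∫ s in Ioi (0:ℝ), s ^ (3-1) • ‖fderiv ℝ (⇑f) (s • e1)‖ ^ 2) := h
    _ = 3 * (volume (Metric.ball (0:E3) 1)).toReal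
        * ∫ s in Ioi (0:ℝ), s ^ 2 * ‖fderiv ℝ (⇑f) (s • e1)‖ ^ 2 := by
        simp [smul_eq_mul, mul_assoc]

lemma cont_smul_e1 : Continuous (fun s : ℝ => s • e1) := by fun_prop

lemma sq_decay_bound {F : Type*} [NormedAddCommGroup F] [NormedSpace ℝ F]
    (u : SchwartzMap E3 F) {B : ℝ} (hB : 0 < B)
    (hdec : ∀ x : E3, ‖u x‖ ≤ B / (1 + ‖x‖) ^ 2) {s : ℝ} (hs0 : 0 < s) :
    s ^ 2 * ‖u (s • e1)‖ ^ 2 ≤ B ^ 2 / (1 + s) ^ 2 := by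
  have h1s : (0:ℝ) < 1 + s := by linarith
  have hb := hdec (s • e1)
  rw [norm_smul_e1 s hs0.le] at hb
  have h2 : ‖u (s • e1)‖ ^ 2 ≤ B ^ 2 / (1 + s) ^ 4 := by
    have h := pow_le_pow_left₀ (norm_nonneg _) hb 2
    rw [div_pow, ← pow_mul] at h
    norm_num at h
    exact h
  have hss : s ^ 2 ≤ (1 + s) ^ 2 := by nlinarith
  calc s ^ 2 * ‖u (s • e1)‖ ^ 2 ≤ s ^ 2 * (B ^ 2 / (1 + s) ^ 4) :=
        mul_le_mul_of_nonneg_left h2 (sq_nonneg s)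
    _ = s ^ 2 * B ^ 2 / (1 + s) ^ 4 := by ring
    _ ≤ B ^ 2 / (1 + s) ^ 2 := by
        rw [div_le_div_iff₀ (by positivity) (by positivity)]
        calc s ^ 2 * B ^ 2 * (1 + s) ^ 2 ≤ (1+s) ^ 2 * B ^ 2 * (1 + s) ^ 2 := by
              gcongr
          _ = B ^ 2 * (1 + s) ^ 4 := by ring

lemma integrableOn_sq_schwartz {F : Type*} [NormedAddCommGroup F] [NormedSpace ℝ F]
    (u : SchwartzMap E3 F) :
    IntegrableOn (fun s : ℝ => s ^ 2 * ‖u (s • e1)‖ ^ 2) (Ioi 0) volume := by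
  obtain ⟨B, hB, hdec⟩ := schwartz_decay2 u
  have hmaj : Integrable (fun s : ℝ => B ^ 2 * (1 + ‖s‖) ^ (-(2:ℝ))) volume := by
    refine Integrable.const_mul ?_ _
    apply integrable_one_add_norm
    simp
  refine Integrable.mono (hmaj.restrict (s := Ioi 0)) ?_ ?_
  · exact ((continuous_pow 2).mul
      ((u.continuous.comp cont_smul_e1).norm.pow 2)).aestronglyMeasurable.restrict
  · rw [ae_restrict_iff' measurableSet_Ioi]
    filter_upwards with s hs
    have hs0 : (0:ℝ) < s := hs
    have h1s : (0:ℝ) < 1 + s := by linarith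
    have hr : (1 + ‖s‖) ^ (-(2:ℝ)) = ((1 + s) ^ 2)⁻¹ := by
      rw [Real.norm_eq_abs, _root_.abs_of_pos hs0, ← Real.rpow_natCast (1+s) 2,
        ← Real.rpow_neg h1s.le]
      norm_num
    rw [Real.norm_eq_abs, Real.norm_eq_abs, _root_.abs_of_nonneg (by positivity), hr,
      _root_.abs_of_nonneg (by positivity)]
    rw [← div_eq_mul_inv]
    exact sq_decay_bound u hB hdec hs0

variable (f : SchwartzMap E3 ℂ)

def gg (s : ℝ) : ℂ := f (s • e1)

def GG (s : ℝ) : ℂ := SchwartzMap.pderivCLM ℝ e1 f (s • e1)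

lemma cont_gg : Continuous (gg f) := f.continuous.comp cont_smul_e1

lemma cont_GG : Continuous (GG f) := (SchwartzMap.pderivCLM ℝ e1 f).continuous.comp cont_smul_e1

lemma hasDerivAt_gg (s : ℝ) : HasDerivAt (gg f) (GG f s) s := by
  have hc : HasDerivAt (fun t : ℝ => t • e1) e1 s := by
    simpa using (hasDerivAt_id s).smul_const e1
  have := (f.differentiable.differentiableAt.hasFDerivAt).comp_hasDerivAt s hc
  exact this

lemma hasDerivAt_hh (s : ℝ) :
    HasDerivAt (fun t : ℝ => (t:ℂ) * gg f t) (gg f s + s * GG f s) s := by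
  have h1 : HasDerivAt (fun t : ℝ => (t:ℂ)) 1 s := by
    exact Complex.ofRealCLM.hasDerivAt (x := s)
  have := h1.mul (hasDerivAt_gg f s)
  exact this.congr_deriv (by ring)

lemma norm_sq_c (z : ℂ) : ‖z‖ ^ 2 = z.re ^ 2 + z.im ^ 2 := by
  rw [Complex.sq_norm, Complex.normSq_apply]; ring

lemma hasDerivAt_q (s : ℝ) :
    HasDerivAt (fun t : ℝ => t * ‖gg f t‖ ^ 2)
      (‖gg f s‖ ^ 2 + s * (2 * ((gg f s).re * (GG f s).re + (gg f s).im * (GG f s).im))) s := by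
  have hre : HasDerivAt (fun t => (gg f t).re) ((GG f s).re) s :=
    Complex.reCLM.hasFDerivAt.comp_hasDerivAt s (hasDerivAt_gg f s)
  have him : HasDerivAt (fun t => (gg f t).im) ((GG f s).im) s :=
    Complex.imCLM.hasFDerivAt.comp_hasDerivAt s (hasDerivAt_gg f s)
  have h := (hasDerivAt_id s).mul ((hre.pow 2).add (him.pow 2))
  have heq : (fun t : ℝ => t * ‖gg f t‖ ^ 2)
      = fun t : ℝ => id t * ((gg f t).re ^ 2 + (gg f t).im ^ 2) := by
    funext t; rw [norm_sq_c]; rfl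
  rw [heq]
  refine h.congr_deriv ?_
  rw [norm_sq_c]
  push_cast
  simp only [id, Pi.add_apply, Pi.pow_apply]
  ring

lemma ftc_hh (r : ℝ) : ∫ s in (0:ℝ)..r, (gg f s + s * GG f s) = (r:ℂ) * gg f r := by
  have h := intervalIntegral.integral_eq_sub_of_hasDerivAt
    (f := fun t : ℝ => (t:ℂ) * gg f t) (a := 0) (b := r)
    (fun s _ => hasDerivAt_hh f s)
    (Continuous.intervalIntegrable (by
      exact (cont_gg f).add ((Complex.continuous_ofReal.comp continuous_id).mul (cont_GG f))) 0 r)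
  simpa using h

def dq (s : ℝ) : ℝ :=
  ‖gg f s‖ ^ 2 + s * (2 * ((gg f s).re * (GG f s).re + (gg f s).im * (GG f s).im))

lemma cont_dq : Continuous (dq f) := by
  unfold dq
  have h1 := cont_gg f
  have h2 := cont_GG f
  fun_prop

lemma ftc_q (T : ℝ) : ∫ s in (0:ℝ)..T, dq f s = T * ‖gg f T‖ ^ 2 := by
  have h := intervalIntegral.integral_eq_sub_of_hasDerivAt
    (f := fun t : ℝ => t * ‖gg f t‖ ^ 2) (a := 0) (b := T)
    (fun s _ => hasDerivAt_q f s)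
    (Continuous.intervalIntegrable (cont_dq f) 0 T)
  simpa [dq] using h

lemma hprime_sq (s : ℝ) :
    ‖gg f s + s * GG f s‖ ^ 2 = dq f s + s ^ 2 * ‖GG f s‖ ^ 2 := by
  rw [norm_sq_c, dq, norm_sq_c, norm_sq_c]
  simp only [Complex.add_re, Complex.add_im, Complex.mul_re, Complex.mul_im,
    Complex.ofReal_re, Complex.ofReal_im]
  ring

lemma energy_identity (T : ℝ) :
    ∫ s in (0:ℝ)..T, ‖gg f s + s * GG f s‖ ^ 2
      = T * ‖gg f T‖ ^ 2 + ∫ s in (0:ℝ)..T, s ^ 2 * ‖GG f s‖ ^ 2 := by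
  have h1 : (fun s : ℝ => ‖gg f s + s * GG f s‖ ^ 2)
      = fun s : ℝ => dq f s + s ^ 2 * ‖GG f s‖ ^ 2 := funext (hprime_sq f)
  rw [intervalIntegral.integral_congr (g := fun s : ℝ => dq f s + s ^ 2 * ‖GG f s‖ ^ 2)
    (fun s _ => hprime_sq f s)]
  rw [intervalIntegral.integral_add (Continuous.intervalIntegrable (cont_dq f) 0 T)
    (Continuous.intervalIntegrable (by
      exact (continuous_pow 2).mul ((cont_GG f).norm.pow 2)) 0 T)]
  rw [ftc_q]

lemma oneD_bound (r : ℝ) (hr : 0 < r) :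
    r ^ 2 * ‖gg f r‖ ^ 2 ≤ r * ∫ s in Ioi (0:ℝ), s ^ 2 * ‖GG f s‖ ^ 2 := by
  set J : ℝ := ∫ s in Ioi (0:ℝ), s ^ 2 * ‖GG f s‖ ^ 2 with hJ
  have hJ_int : IntegrableOn (fun s : ℝ => s ^ 2 * ‖GG f s‖ ^ 2) (Ioi 0) volume :=
    integrableOn_sq_schwartz (SchwartzMap.pderivCLM ℝ e1 f)
  have hJ0 : 0 ≤ J := setIntegral_nonneg measurableSet_Ioi fun s _ => by positivity
  set hp : ℝ → ℝ := fun s => ‖gg f s + s * GG f s‖ with hhp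
  have hp_cont : Continuous hp := by
    exact ((cont_gg f).add ((Complex.continuous_ofReal.comp continuous_id).mul (cont_GG f))).norm
  set Q : ℝ := ∫ s in Ioc (0:ℝ) r, hp s ^ 2 with hQdef
  have hQ0 : 0 ≤ Q := setIntegral_nonneg measurableSet_Ioc fun s _ => by positivity
  -- Cauchy-Schwarz step
  have hCS : ‖(r:ℂ) * gg f r‖ ≤ Q ^ (1/2:ℝ) * r ^ (1/2:ℝ) := by
    haveI hfin : IsFiniteMeasure (volume.restrict (Ioc (0:ℝ) r)) := by
      constructor
      rw [Measure.restrict_apply_univ]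
      simp [Real.volume_Ioc]
    have hmeas : AEStronglyMeasurable hp (volume.restrict (Ioc (0:ℝ) r)) :=
      hp_cont.aestronglyMeasurable.restrict
    have hsq_int : Integrable (fun s => hp s ^ 2) (volume.restrict (Ioc (0:ℝ) r)) :=
      (hp_cont.pow 2).integrableOn_Ioc
    have hmem : MemLp hp (ENNReal.ofReal 2) (volume.restrict (Ioc (0:ℝ) r)) := by
      rw [show ENNReal.ofReal 2 = 2 by norm_num]
      exact (memLp_two_iff_integrable_sq hmeas).mpr hsq_int
    have hmem1 : MemLp (fun _ : ℝ => (1:ℝ)) (ENNReal.ofReal 2)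
        (volume.restrict (Ioc (0:ℝ) r)) := memLp_const 1
    have hpq : Real.HolderConjugate 2 2 := Real.HolderConjugate.two_two
    have hold := integral_mul_le_Lp_mul_Lq_of_nonneg hpq
      (Eventually.of_forall fun s => norm_nonneg _)
      (Eventually.of_forall fun s => zero_le_one) hmem hmem1
    simp only [mul_one] at hold
    have hrp : ∀ x : ℝ, 0 ≤ x → x ^ (2:ℝ) = x ^ (2:ℕ) := fun x hx => by
      rw [show (2:ℝ) = ((2:ℕ):ℝ) by norm_num, Real.rpow_natCast]
    have e1 : ∫ (a : ℝ) in Ioc (0:ℝ) r, ‖gg f a + ↑a * GG f a‖ ^ (2:ℝ) = Q := by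
      rw [hQdef]
      exact integral_congr_ae (Eventually.of_forall fun a => hrp _ (norm_nonneg _))
    have hone : ∫ (_ : ℝ) in Ioc (0:ℝ) r, (1:ℝ) ^ (2:ℝ) = r := by
      simp [Real.volume_Ioc, hr.le]
    rw [e1, hone] at hold
    have hnorm : ‖(r:ℂ) * gg f r‖ ≤ ∫ s in Ioc (0:ℝ) r, hp s := by
      rw [← ftc_hh f r, ← intervalIntegral.integral_of_le hr.le]
      exact intervalIntegral.norm_integral_le_integral_norm hr.le
    exact hnorm.trans hold
  have hsq : ‖(r:ℂ) * gg f r‖ ^ 2 ≤ Q * r := by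
    have h2 : (Q ^ (1/2:ℝ) * r ^ (1/2:ℝ)) ^ 2 = Q * r := by
      rw [mul_pow, ← Real.rpow_natCast (Q ^ (1/2:ℝ)) 2, ← Real.rpow_natCast (r ^ (1/2:ℝ)) 2,
        ← Real.rpow_mul hQ0, ← Real.rpow_mul hr.le]
      norm_num
    calc ‖(r:ℂ) * gg f r‖ ^ 2 ≤ (Q ^ (1/2:ℝ) * r ^ (1/2:ℝ)) ^ 2 :=
          pow_le_pow_left₀ (norm_nonneg _) hCS 2
      _ = Q * r := h2
  -- Q ≤ J
  have hQJ : Q ≤ J := by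
    have hev : ∀ T : ℝ, max r 1 ≤ T → Q ≤ T * ‖gg f T‖ ^ 2 + J := by
      intro T hT
      have hrT : r ≤ T := (le_max_left r 1).trans hT
      have hT0 : (0:ℝ) < T := lt_of_lt_of_le one_pos ((le_max_right r 1).trans hT)
      have step1 : Q ≤ ∫ s in Ioc (0:ℝ) T, hp s ^ 2 := by
        refine setIntegral_mono_set ((hp_cont.pow 2).integrableOn_Ioc) ?_ ?_
        · filter_upwards with s using by positivity
        · exact HasSubset.Subset.eventuallyLE (Ioc_subset_Ioc_right hrT)
      have step2 : ∫ s in Ioc (0:ℝ) T, hp s ^ 2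
          = T * ‖gg f T‖ ^ 2 + ∫ s in Ioc (0:ℝ) T, s ^ 2 * ‖GG f s‖ ^ 2 := by
        rw [← intervalIntegral.integral_of_le hT0.le, ← intervalIntegral.integral_of_le hT0.le]
        exact energy_identity f T
      have step3 : ∫ s in Ioc (0:ℝ) T, s ^ 2 * ‖GG f s‖ ^ 2 ≤ J := by
        refine setIntegral_mono_set hJ_int ?_ ?_
        · filter_upwards with s using by positivity
        · exact HasSubset.Subset.eventuallyLE Ioc_subset_Ioi_self
      calc Q ≤ ∫ s in Ioc (0:ℝ) T, hp s ^ 2 := step1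
        _ = T * ‖gg f T‖ ^ 2 + ∫ s in Ioc (0:ℝ) T, s ^ 2 * ‖GG f s‖ ^ 2 := step2
        _ ≤ T * ‖gg f T‖ ^ 2 + J := by linarith [step3]
    have hlim : Tendsto (fun T : ℝ => T * ‖gg f T‖ ^ 2) atTop (𝓝 0) := by
      obtain ⟨B, hB, hdec⟩ := schwartz_decay2 f
      have hb : ∀ᶠ T : ℝ in atTop, T * ‖gg f T‖ ^ 2 ≤ B ^ 2 / T := by
        filter_upwards [eventually_gt_atTop 0] with T hT0
        have h1 := sq_decay_bound f hB hdec hT0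
        have h2 : T ^ 2 * ‖gg f T‖ ^ 2 ≤ B ^ 2 := by
          refine h1.trans ?_
          rw [div_le_iff₀ (by positivity)]
          nlinarith [sq_nonneg (1+T), hB.le]
        rw [le_div_iff₀ hT0]
        calc T * ‖gg f T‖ ^ 2 * T = T ^ 2 * ‖gg f T‖ ^ 2 := by ring
          _ ≤ B ^ 2 := h2
      have hnn : ∀ᶠ T : ℝ in atTop, 0 ≤ T * ‖gg f T‖ ^ 2 := by
        filter_upwards [eventually_ge_atTop 0] with T hT0
        positivity
      have hdiv : Tendsto (fun T : ℝ => B ^ 2 / T) atTop (𝓝 0) :=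
        tendsto_const_nhds.div_atTop tendsto_id
      exact squeeze_zero' hnn hb hdiv
    have hlim2 : Tendsto (fun T : ℝ => T * ‖gg f T‖ ^ 2 + J) atTop (𝓝 J) := by
      simpa using hlim.add (tendsto_const_nhds (x := J))
    exact ge_of_tendsto hlim2 (eventually_atTop.mpr ⟨max r 1, hev⟩)
  have hfinal : ‖(r:ℂ) * gg f r‖ ^ 2 = r ^ 2 * ‖gg f r‖ ^ 2 := by
    rw [norm_mul, Complex.norm_real, Real.norm_eq_abs, _root_.abs_of_pos hr, mul_pow]
  calc r ^ 2 * ‖gg f r‖ ^ 2 = ‖(r:ℂ) * gg f r‖ ^ 2 := hfinal.symm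
    _ ≤ Q * r := hsq
    _ ≤ J * r := mul_le_mul_of_nonneg_right hQJ hr.le
    _ = r * J := mul_comm _ _

end Stmt16Aux

/-- the radial Sobolev embedding `‖x‖ |f(x)|² ≤ C ‖f‖²_{Ḣ¹}` on `ℝ³`. -/
theorem stmt16 :
    ∃ C : ℝ, 0 < C ∧ ∀ f : SchwartzMap (Rd 3) ℂ,
      (∀ x y : Rd 3, ‖x‖ = ‖y‖ → f x = f y) →
      ∀ x : Rd 3, ‖x‖ * ‖f x‖ ^ 2 ≤ C * ∫ ξ : Rd 3, ‖ξ‖ ^ 2 * ‖FT (⇑f) ξ‖ ^ 2 := by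
  classical
  set κ : ℝ := (volume (Metric.ball (0 : Stmt16Aux.E3) 1)).toReal with hκdef
  have hκ : 0 < κ := ENNReal.toReal_pos (Metric.measure_ball_pos volume 0 one_pos).ne'
    measure_ball_lt_top.ne
  refine ⟨(2 * Real.pi) ^ 2 / κ, by positivity, fun f hrad x => ?_⟩
  set I : ℝ := ∫ ξ : Rd 3, ‖ξ‖ ^ 2 * ‖FT (⇑f) ξ‖ ^ 2 with hIdef
  have hIF : I = ∫ ξ : Stmt16Aux.E3, ‖ξ‖ ^ 2 * ‖𝓕 (⇑f) ξ‖ ^ 2 := rfl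
  have hI0 : 0 ≤ I := by
    rw [hIF]; exact integral_nonneg fun ξ => by positivity
  rcases eq_or_lt_of_le (norm_nonneg x) with hx0 | hr
  · rw [← hx0, zero_mul]
    exact mul_nonneg (by positivity) hI0
  · set r : ℝ := ‖x‖ with hrdef
    -- 1D bound
    have h1 := Stmt16Aux.oneD_bound f r hr
    set J1 : ℝ := ∫ s in Ioi (0:ℝ), s ^ 2 * ‖Stmt16Aux.GG f s‖ ^ 2 with hJ1def
    set J2 : ℝ := ∫ s in Ioi (0:ℝ), s ^ 2 * ‖fderiv ℝ (⇑f) (s • Stmt16Aux.e1)‖ ^ 2 with hJ2def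
    have hJ1J2 : J1 ≤ J2 := by
      have hint2 : IntegrableOn (fun s : ℝ => s ^ 2 * ‖fderiv ℝ (⇑f) (s • Stmt16Aux.e1)‖ ^ 2)
          (Ioi 0) volume := by
        have := Stmt16Aux.integrableOn_sq_schwartz (SchwartzMap.fderivCLM ℝ _ _ f)
        simpa only [SchwartzMap.fderivCLM_apply] using this
      refine setIntegral_mono_on (Stmt16Aux.integrableOn_sq_schwartz
        (SchwartzMap.pderivCLM ℝ Stmt16Aux.e1 f)) hint2 measurableSet_Ioi fun s _ => ?_
      have hGle : ‖Stmt16Aux.GG f s‖ ≤ ‖fderiv ℝ (⇑f) (s • Stmt16Aux.e1)‖ := by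
        have h := (fderiv ℝ (⇑f) (s • Stmt16Aux.e1)).le_opNorm Stmt16Aux.e1
        rw [Stmt16Aux.norm_e1, mul_one] at h
        simpa [Stmt16Aux.GG, SchwartzMap.pderivCLM_apply] using h
      have := pow_le_pow_left₀ (norm_nonneg _) hGle 2
      exact mul_le_mul_of_nonneg_left this (sq_nonneg s)
    -- polar coordinates
    have hpolar := Stmt16Aux.polar_fderiv f hrad
    set A : ℝ := ∫ y : Stmt16Aux.E3, ‖fderiv ℝ (⇑f) y‖ ^ 2 with hAdef
    -- frequency side
    have hA : A ≤ 3 * ((2 * Real.pi) ^ 2 * I) := by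
      have hptw : ∀ y : Stmt16Aux.E3, ‖fderiv ℝ (⇑f) y‖ ^ 2
          ≤ 3 * ∑ j : Fin 3,
            ‖(SchwartzMap.pderivCLM ℝ (EuclideanSpace.single j (1:ℝ)) f) y‖ ^ 2 := by
        intro y
        have := Stmt16Aux.opnorm_sq_le (fderiv ℝ (⇑f) y)
        simpa only [SchwartzMap.pderivCLM_apply] using this
      have hintL : Integrable (fun y : Stmt16Aux.E3 => ‖fderiv ℝ (⇑f) y‖ ^ 2) volume := by
        have := Stmt16Aux.schwartz_sq_integrable (SchwartzMap.fderivCLM ℝ _ _ f)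
        simpa only [SchwartzMap.fderivCLM_apply] using this
      have hintR : Integrable (fun y : Stmt16Aux.E3 => 3 * ∑ j : Fin 3,
          ‖(SchwartzMap.pderivCLM ℝ (EuclideanSpace.single j (1:ℝ)) f) y‖ ^ 2) volume := by
        refine Integrable.const_mul ?_ 3
        exact integrable_finset_sum _ fun j _ =>
          Stmt16Aux.schwartz_sq_integrable (SchwartzMap.pderivCLM ℝ (EuclideanSpace.single j (1:ℝ)) f)
      have hle : A ≤ ∫ y : Stmt16Aux.E3, 3 * ∑ j : Fin 3,
          ‖(SchwartzMap.pderivCLM ℝ (EuclideanSpace.single j (1:ℝ)) f) y‖ ^ 2 :=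
        integral_mono hintL hintR hptw
      refine hle.trans ?_
      rw [integral_const_mul, integral_finset_sum _ fun j _ =>
        Stmt16Aux.schwartz_sq_integrable (SchwartzMap.pderivCLM ℝ (EuclideanSpace.single j (1:ℝ)) f)]
      rw [Stmt16Aux.sum_pderiv_sq f, hIF]
    -- combine
    have hJ2fin : J2 ≤ (2 * Real.pi) ^ 2 * I / κ := by
      rw [le_div_iff₀ hκ]
      have : 3 * κ * J2 ≤ 3 * ((2 * Real.pi) ^ 2 * I) := by
        rw [← hpolar]; exact hA
      nlinarith [this]
    have hr2 : r * ‖f x‖ ^ 2 ≤ J1 := by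
      have hfx : f x = Stmt16Aux.gg f r := by
        apply hrad
        rw [Stmt16Aux.norm_smul_e1 r hr.le]
      have h2 : r * (r * ‖f x‖ ^ 2) ≤ r * J1 := by
        calc r * (r * ‖f x‖ ^ 2) = r ^ 2 * ‖Stmt16Aux.gg f r‖ ^ 2 := by rw [← hfx]; ring
          _ ≤ r * J1 := h1
      exact le_of_mul_le_mul_left h2 hr
    calc r * ‖f x‖ ^ 2 ≤ J1 := hr2
      _ ≤ J2 := hJ1J2
      _ ≤ (2 * Real.pi) ^ 2 * I / κ := hJ2fin
      _ = (2 * Real.pi) ^ 2 / κ * I := by ring
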